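/- Let a, b, k be integers with a ≠ 0, b ≠ 0 and k ≥ 2, and suppose a + b√k ≠ 1 and a + b√k ≠ −1 (√k denoting the nonnegative real square root of k). Then the set of irreducible λ-quiddities over ⟨a + b√k⟩ is exactly {(0, l(a+b√k), 0, −l(a+b√k)) : l ∈ ℤ} ∪ {(l(a+b√k), 0, −l(a+b√k), 0) : l ∈ ℤ}. -/

import Mathlib

open Matrix Polynomial

noncomputable section

/-- The elementary matrix [[a, -1], [1, 0]]. -/
def matE (a : ℂ) : Matrix (Fin 2) (Fin 2) ℂ := !![a, -1; 1, 0]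

/-- M_n(a_1, …, a_n) = matE a_n * matE a_{n-1} * ⋯ * matE a_1, for the list [a_1, …, a_n]. -/
def Mlist (l : List ℂ) : Matrix (Fin 2) (Fin 2) ℂ := (l.reverse.map matE).prod

/-- A λ-quiddity over R : a nonempty tuple of elements of R with M_n(a_1,…,a_n) = ±Id. -/
def IsQuiddity (R : Set ℂ) (l : List ℂ) : Prop :=
  l ≠ [] ∧ (∀ x ∈ l, x ∈ R) ∧ (Mlist l = 1 ∨ Mlist l = -1)

/-- (a_1,…,a_n) ⊕ (b_1,…,b_m) := (a_1+b_m, a_2,…,a_{n-1}, a_n+b_1, b_2,…,b_{m-1}). -/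
def oplus (a b : List ℂ) : List ℂ :=
  (a.headI + b.getLastD 0) ::
    (a.tail.dropLast ++ (a.getLastD 0 + b.headI) :: b.tail.dropLast)

/-- b is obtained from a by a cyclic permutation of a or of the reversal of a. -/
def CyclicEquiv (a b : List ℂ) : Prop :=
  (∃ k, b = a.rotate k) ∨ (∃ k, b = a.reverse.rotate k)

/-- A λ-quiddity c over R is reducible if c ∼ (a_1,…,a_m) ⊕ (b_1,…,b_l) with
(a_1,…,a_m) a tuple of elements of R, (b_1,…,b_l) a λ-quiddity over R, m ≥ 3 and l ≥ 3. -/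
def ReducibleQuiddity (R : Set ℂ) (c : List ℂ) : Prop :=
  ∃ a b : List ℂ, (∀ x ∈ a, x ∈ R) ∧ IsQuiddity R b ∧
    3 ≤ a.length ∧ 3 ≤ b.length ∧ CyclicEquiv c (oplus a b)

/-- The irreducible λ-quiddities over R : the λ-quiddities of size ≥ 3 which are not
reducible (those of size < 3, i.e. (0,0), are by convention not irreducible). -/
def IrreducibleQuiddity (R : Set ℂ) (c : List ℂ) : Prop :=
  IsQuiddity R c ∧ 3 ≤ c.length ∧ ¬ ReducibleQuiddity R c

/-- The subgroup ⟨w⟩ = {kw : k ∈ ℤ} of (ℂ, +), as a set. -/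
def subgroupGen (w : ℂ) : Set ℂ := {x | ∃ k : ℤ, x = (k : ℂ) * w}

end

/-! ### Auxiliary lemmas -/

noncomputable section AuxQuiddity

lemma Mlist_nil : Mlist [] = 1 := rfl

lemma Mlist_cons (x : ℂ) (l : List ℂ) : Mlist (x :: l) = Mlist l * matE x := by simp [Mlist]

lemma Mlist_concat (x : ℂ) (l : List ℂ) : Mlist (l ++ [x]) = matE x * Mlist l := by simp [Mlist]

/-- Growth: if all entries have absolute value ≥ 2, the bottom-left entry is ≥ 1. -/
lemma mlist_growth (l : List ℂ) (hne : l ≠ []) (h : ∀ x ∈ l, 2 ≤ ‖x‖) :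
    1 ≤ ‖Mlist l 1 0‖ ∧ ‖Mlist l 1 0‖ + 1 ≤ ‖Mlist l 0 0‖ := by
  induction l using List.reverseRecOn with
  | nil => exact absurd rfl hne
  | append_singleton l x ih =>
    rcases List.eq_nil_or_concat' l with rfl | ⟨l', y, rfl⟩
    · have hx := h x (by simp)
      refine ⟨?_, ?_⟩ <;> simp [Mlist, matE] <;> linarith
    · have ih' := ih (by simp) (fun z hz => h z (by simp at hz ⊢; tauto))
      have hx : 2 ≤ ‖x‖ := h x (by simp)
      rw [Mlist_concat]
      have e0 : (matE x * Mlist (l' ++ [y])) 1 0 = Mlist (l' ++ [y]) 0 0 := by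
        simp [matE, Matrix.mul_apply, Fin.sum_univ_two]
      have e1 : (matE x * Mlist (l' ++ [y])) 0 0
          = x * Mlist (l' ++ [y]) 0 0 - Mlist (l' ++ [y]) 1 0 := by
        simp [matE, Matrix.mul_apply, Fin.sum_univ_two]; ring
      rw [e0, e1]
      obtain ⟨h1, h2⟩ := ih'
      set P := Mlist (l' ++ [y]) 0 0
      set Q := Mlist (l' ++ [y]) 1 0
      have key : ‖x‖ * ‖P‖ - ‖Q‖ ≤ ‖x * P - Q‖ := by
        have h3 := norm_sub_norm_le (x * P) Q
        simp only [norm_mul] at h3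
        linarith
      have hP0 : (0:ℝ) ≤ ‖P‖ := norm_nonneg P
      constructor
      · linarith
      · nlinarith

lemma not_pm_one_of_big (l : List ℂ) (hne : l ≠ []) (h : ∀ x ∈ l, 2 ≤ ‖x‖) :
    ¬ (Mlist l = 1 ∨ Mlist l = -1) := by
  intro hM
  have h1 := (mlist_growth l hne h).1
  have h0 : Mlist l 1 0 = 0 := by
    rcases hM with hM | hM <;> rw [hM] <;> simp [Matrix.one_apply]
  rw [h0] at h1; simp at h1; linarith

/-! #### Conjugation machinery -/

def GoodM (s : ℂ) (M N : Matrix (Fin 2) (Fin 2) ℂ) : Prop :=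
  ∀ i j, ∃ x y : ℚ, M i j = (x:ℂ) + (y:ℂ) * s ∧ N i j = (x:ℂ) - (y:ℂ) * s

lemma good_one (s : ℂ) : GoodM s 1 1 := by
  intro i j
  refine ⟨if i = j then 1 else 0, 0, ?_, ?_⟩ <;> simp [Matrix.one_apply] <;> split <;> simp

lemma good_mul (s : ℂ) (q : ℚ) (hs : s^2 = (q:ℂ)) (M M' N N' : Matrix (Fin 2) (Fin 2) ℂ)
    (h : GoodM s M N) (h' : GoodM s M' N') : GoodM s (M * M') (N * N') := by
  intro i j
  obtain ⟨x0, y0, e0, f0⟩ := h i 0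
  obtain ⟨x1, y1, e1, f1⟩ := h i 1
  obtain ⟨x0', y0', e0', f0'⟩ := h' 0 j
  obtain ⟨x1', y1', e1', f1'⟩ := h' 1 j
  refine ⟨x0 * x0' + q * (y0 * y0') + x1 * x1' + q * (y1 * y1'),
          x0 * y0' + y0 * x0' + x1 * y1' + y1 * x1', ?_, ?_⟩ <;>
    rw [Matrix.mul_apply, Fin.sum_univ_two] <;>
    [rw [e0, e1, e0', e1']; rw [f0, f1, f0', f1']] <;>
    push_cast <;> linear_combination (y0 * y0' + y1 * y1' : ℂ) * hs

lemma good_matE (s : ℂ) (p p' : ℚ) :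
    GoodM s (matE ((p:ℂ) + (p':ℂ) * s)) (matE ((p:ℂ) - (p':ℂ) * s)) := by
  intro i j
  fin_cases i <;> fin_cases j
  · exact ⟨p, p', by simp [matE], by simp [matE]⟩
  · exact ⟨-1, 0, by simp [matE], by simp [matE]⟩
  · exact ⟨1, 0, by simp [matE], by simp [matE]⟩
  · exact ⟨0, 0, by simp [matE], by simp [matE]⟩

lemma good_Mlist (s : ℂ) (q : ℚ) (hs : s^2 = (q:ℂ)) (L : List (ℚ × ℚ)) :
    GoodM s (Mlist (L.map fun p => (p.1:ℂ) + (p.2:ℂ) * s))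
            (Mlist (L.map fun p => (p.1:ℂ) - (p.2:ℂ) * s)) := by
  induction L with
  | nil => exact good_one s
  | cons p L ih =>
    simp only [List.map_cons, Mlist_cons]
    exact good_mul s q hs _ _ _ _ ih (good_matE s p.1 p.2)

lemma good_eq (s₀ : ℝ) (hirr : Irrational s₀) (M N : Matrix (Fin 2) (Fin 2) ℂ)
    (g : GoodM (s₀:ℂ) M N) (hM : ∀ i j, ∃ r : ℚ, M i j = (r:ℂ)) : N = M := by
  ext i j
  obtain ⟨x, y, e, f⟩ := g i j
  obtain ⟨r, hr⟩ := hM i j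
  have hy : y = 0 := by
    by_contra hy
    have hre : ((x:ℝ) + (y:ℝ) * s₀ : ℝ) = ((r:ℝ)) := by
      have := e.symm.trans hr
      exact_mod_cast this
    apply hirr
    exact ⟨(r - x)/y, by push_cast; field_simp at hre ⊢; linarith⟩
  subst hy
  rw [f, e]
  simp

lemma rat_entries_of_pm_one (M : Matrix (Fin 2) (Fin 2) ℂ) (h : M = 1 ∨ M = -1) :
    ∀ i j, ∃ r : ℚ, M i j = (r:ℂ) := by
  intro i j
  rcases h with h | h <;> rw [h]
  · exact ⟨if i = j then 1 else 0, by simp [Matrix.one_apply]; split <;> simp⟩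
  · exact ⟨if i = j then -1 else 0, by simp [Matrix.one_apply]; split <;> simp⟩

lemma conj_transfer (s₀ : ℝ) (hirr : Irrational s₀) (q : ℚ) (hs : ((s₀:ℂ))^2 = (q:ℂ))
    (L : List (ℚ × ℚ))
    (h : Mlist (L.map fun p => (p.1:ℂ) + (p.2:ℂ) * (s₀:ℂ)) = 1 ∨
         Mlist (L.map fun p => (p.1:ℂ) + (p.2:ℂ) * (s₀:ℂ)) = -1) :
    Mlist (L.map fun p => (p.1:ℂ) - (p.2:ℂ) * (s₀:ℂ)) = 1 ∨
      Mlist (L.map fun p => (p.1:ℂ) - (p.2:ℂ) * (s₀:ℂ)) = -1 := by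
  have g := good_Mlist (s₀:ℂ) q hs L
  have heq := good_eq s₀ hirr _ _ g (rat_entries_of_pm_one _ h)
  rw [heq]
  exact h

/-! #### Negation trick -/

def matJ : Matrix (Fin 2) (Fin 2) ℂ := !![1, 0; 0, -1]

lemma matJ_sq : matJ * matJ = 1 := by
  simp [matJ, Matrix.mul_fin_two, Matrix.one_fin_two]

lemma matE_neg (x : ℂ) : matE (-x) = -(matJ * matE x * matJ) := by
  ext i j
  fin_cases i <;> fin_cases j <;> simp [matJ, matE, Matrix.mul_fin_two]

lemma Mlist_negmap (l : List ℂ) :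
    Mlist (l.map fun x => -x) = (-1:ℂ)^l.length • (matJ * Mlist l * matJ) := by
  induction l with
  | nil =>
    rw [show (List.map (fun x => -x) [] : List ℂ) = [] from rfl,
      show Mlist [] = 1 from rfl]
    simp [matJ_sq]
  | cons x l ih =>
    simp only [List.map_cons, Mlist_cons, ih, matE_neg, List.length_cons]
    rw [smul_mul_assoc]
    simp only [Matrix.mul_assoc]
    simp only [Matrix.mul_neg, smul_neg]
    rw [← Matrix.mul_assoc matJ matJ, matJ_sq, Matrix.one_mul]
    rw [pow_succ, mul_smul, neg_one_smul, smul_neg]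

lemma quiddity_neg (l : List ℂ) (h : Mlist l = 1 ∨ Mlist l = -1) :
    Mlist (l.map fun x => -x) = 1 ∨ Mlist (l.map fun x => -x) = -1 := by
  have hJ1 : matJ * (1 : Matrix (Fin 2) (Fin 2) ℂ) * matJ = 1 := by
    rw [Matrix.mul_one, matJ_sq]
  have hJ2 : matJ * (-1 : Matrix (Fin 2) (Fin 2) ℂ) * matJ = -1 := by
    rw [Matrix.mul_neg, Matrix.mul_one, Matrix.neg_mul, matJ_sq]
  rw [Mlist_negmap]
  rcases Nat.even_or_odd l.length with hp | hp
  · rw [hp.neg_one_pow]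
    rcases h with h | h <;> rw [h] <;> [left; right] <;> rw [one_smul] <;> [exact hJ1; exact hJ2]
  · rw [hp.neg_one_pow]
    rcases h with h | h <;> rw [h] <;> [right; left] <;> rw [neg_one_smul] <;>
      [rw [hJ1]; rw [hJ2, neg_neg]]

/-! #### Small lengths -/

lemma M3_entry (x y z : ℂ) (h : Mlist [x,y,z] = 1 ∨ Mlist [x,y,z] = -1) :
    y = -1 ∨ y = 1 := by
  have h4 : Mlist [x,y,z] 1 1 = 1 ∨ Mlist [x,y,z] 1 1 = -1 := by
    rcases h with h | h <;> rw [h] <;> simp [Matrix.one_apply]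
  simp [Mlist, matE, Matrix.mul_apply, Fin.sum_univ_two] at h4
  rcases h4 with h | h
  · left; linear_combination -h
  · right; linear_combination h

lemma M4_one (x y z t : ℂ) (h : Mlist [x,y,z,t] = 1) :
    (x = 0 ∧ z = 0 ∧ t = -y) ∨ (y = 0 ∧ z = -x ∧ t = 0) := by
  have h4 : ∀ i j, Mlist [x,y,z,t] i j = (1 : Matrix (Fin 2) (Fin 2) ℂ) i j := fun i j => by
    rw [h]
  have e01 := h4 0 1; have e10 := h4 1 0; have e11 := h4 1 1
  simp [Mlist, matE, Matrix.mul_apply, Fin.sum_univ_two, Matrix.one_apply] at e01 e10 e11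
  rcases e11 with hz | hy
  · subst hz; left
    refine ⟨by linear_combination -e10, rfl, by linear_combination e01⟩
  · subst hy; right
    refine ⟨rfl, by linear_combination -e10, by linear_combination e01⟩

lemma M4_negone (x y z t : ℂ) (h : Mlist [x,y,z,t] = -1) : x * y = 2 := by
  have h4 : ∀ i j, Mlist [x,y,z,t] i j = (-1 : Matrix (Fin 2) (Fin 2) ℂ) i j := fun i j => by
    rw [h]
  have e10 := h4 1 0; have e11 := h4 1 1
  simp [Mlist, matE, Matrix.mul_apply, Fin.sum_univ_two, Matrix.one_apply] at e10 e11
  linear_combination y * e10 + (x*y - 1) * e11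

lemma Mlist_0y0 (y : ℂ) : Mlist [0, y, 0, -y] = 1 := by
  ext i j
  fin_cases i <;> fin_cases j <;>
    simp [Mlist, matE, Matrix.mul_apply, Fin.sum_univ_two, Matrix.one_apply]

lemma Mlist_y0 (y : ℂ) : Mlist [y, 0, -y, 0] = 1 := by
  ext i j
  fin_cases i <;> fin_cases j <;>
    simp [Mlist, matE, Matrix.mul_apply, Fin.sum_univ_two, Matrix.one_apply]

/-! #### Subgroup and list bookkeeping -/

lemma R_zero (w : ℂ) : (0:ℂ) ∈ subgroupGen w := ⟨0, by simp⟩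

lemma R_neg (w : ℂ) {x : ℂ} (h : x ∈ subgroupGen w) : -x ∈ subgroupGen w := by
  obtain ⟨l, rfl⟩ := h; exact ⟨-l, by push_cast; ring⟩

lemma R_add (w : ℂ) {x y : ℂ} (hx : x ∈ subgroupGen w) (hy : y ∈ subgroupGen w) :
    x + y ∈ subgroupGen w := by
  obtain ⟨l, rfl⟩ := hx; obtain ⟨m, rfl⟩ := hy
  exact ⟨l + m, by push_cast; ring⟩

lemma exists_int_list (w : ℂ) (c : List ℂ) (h : ∀ x ∈ c, x ∈ subgroupGen w) :
    ∃ L : List ℤ, c = L.map (fun l : ℤ => (l:ℂ) * w) := by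
  induction c with
  | nil => exact ⟨[], rfl⟩
  | cons x c ih =>
    obtain ⟨L, hL⟩ := ih (fun y hy => h y (List.mem_cons_of_mem _ hy))
    obtain ⟨l, hl⟩ := h x List.mem_cons_self
    exact ⟨l :: L, by rw [List.map_cons, ← hL, hl]⟩

lemma cyclic_length {c d : List ℂ} (h : CyclicEquiv c d) : d.length = c.length := by
  rcases h with ⟨k, rfl⟩ | ⟨k, rfl⟩ <;> simp

lemma oplus_length (a b : List ℂ) :
    (oplus a b).length = a.length - 2 + (b.length - 2) + 2 := by
  simp [oplus]
  omega

lemma no_q3 (w : ℂ) (hone : ∀ l : ℤ, (l:ℂ) * w ≠ 1 ∧ (l:ℂ) * w ≠ -1)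
    (c : List ℂ) (hq : IsQuiddity (subgroupGen w) c) : c.length ≠ 3 := by
  intro hlen
  obtain ⟨hne, hmem, hM⟩ := hq
  obtain ⟨x, y, z, rfl⟩ := List.length_eq_three.mp hlen
  obtain ⟨l, hl⟩ := hmem y (by simp)
  rcases M3_entry x y z hM with h | h <;> rw [hl] at h
  · exact (hone l).2 h
  · exact (hone l).1 h

lemma quiddity_0y0 (w : ℂ) {t : ℂ} (ht : t ∈ subgroupGen w) :
    IsQuiddity (subgroupGen w) [0, t, 0, -t] := by
  refine ⟨by simp, ?_, Or.inl (Mlist_0y0 t)⟩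
  intro x hx
  simp at hx
  rcases hx with rfl | rfl | rfl | rfl
  · exact R_zero w
  · exact ht
  · exact R_zero w
  · exact R_neg w ht

lemma red5 (w : ℂ) (c : List ℂ) (hq : IsQuiddity (subgroupGen w) c) (hlen : 5 ≤ c.length)
    (h0 : (0:ℂ) ∈ c) : ReducibleQuiddity (subgroupGen w) c := by
  obtain ⟨hne, hmem, hM⟩ := hq
  obtain ⟨l₁, l₂, hc⟩ := List.append_of_mem h0
  have hrot : c.rotate (l₁.length + 1) = (l₂ ++ l₁) ++ [0] := by
    have h1 : (l₁ ++ 0 :: l₂).rotate l₁.length = 0 :: (l₂ ++ l₁) := by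
      rw [List.rotate_eq_drop_append_take (by simp)]
      rw [List.drop_left, List.take_left]
      rfl
    rw [hc, ← List.rotate_rotate, h1, List.rotate_cons_succ, List.rotate_zero,
      List.append_assoc]
  have hmemg : ∀ x ∈ l₂ ++ l₁, x ∈ subgroupGen w := by
    intro x hx
    apply hmem
    rw [hc]
    simp at hx ⊢
    tauto
  have hclen : c.length = l₁.length + l₂.length + 1 := by rw [hc]; simp; omega
  have hglen : (l₂ ++ l₁).length = c.length - 1 := by simp; omega
  obtain ⟨u, E, hG⟩ := List.exists_cons_of_ne_nil
    (show l₂ ++ l₁ ≠ [] by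
      intro hnil
      rw [hnil] at hglen
      simp at hglen
      omega)
  rcases List.eq_nil_or_concat' E with rfl | ⟨E₂, t, rfl⟩
  · rw [hG] at hglen; simp at hglen; omega
  rcases List.eq_nil_or_concat' E₂ with rfl | ⟨e, z, rfl⟩
  · rw [hG] at hglen; simp at hglen; omega
  have helen : e.length = c.length - 4 := by
    rw [hG] at hglen; simp at hglen; omega
  have hmem' : ∀ x ∈ u :: ((e ++ [z]) ++ [t]), x ∈ subgroupGen w := by
    rw [← hG]; exact hmemg
  have hu : u ∈ subgroupGen w := hmem' u (by simp)
  have ht : t ∈ subgroupGen w := hmem' t (by simp)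
  refine ⟨(u + t) :: (e ++ [z]), [0, t, 0, -t], ?_, quiddity_0y0 w ht, ?_, by simp,
    Or.inl ⟨l₁.length + 1, ?_⟩⟩
  · intro x hx
    rcases List.mem_cons.mp hx with rfl | hx'
    · exact R_add w hu ht
    · exact hmem' x (by simp at hx' ⊢; tauto)
  · simp
    omega
  · rw [hrot, hG]
    show oplus _ _ = (u :: ((e ++ [z]) ++ [t])) ++ [0]
    simp only [oplus, List.headI, List.tail_cons, List.getLastD_cons, List.getLastD_nil,
      List.getLastD_concat, List.dropLast]
    rw [show u + t + -t = u by ring, add_zero]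
    simp

lemma classify4 (w : ℂ) (htwo : ∀ l m : ℤ, ((l:ℂ) * w) * ((m:ℂ) * w) ≠ 2)
    (c : List ℂ) (hq : IsQuiddity (subgroupGen w) c) (h4 : c.length = 4) :
    (∃ l : ℤ, c = [0, (l:ℂ) * w, 0, -((l:ℂ) * w)]) ∨
      (∃ l : ℤ, c = [(l:ℂ) * w, 0, -((l:ℂ) * w), 0]) := by
  obtain ⟨hne, hmem, hM⟩ := hq
  obtain ⟨x, E, rfl⟩ := List.exists_cons_of_ne_nil hne
  obtain ⟨y, E, rfl⟩ := List.exists_cons_of_ne_nil (show E ≠ [] by rintro rfl; simp at h4)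
  obtain ⟨z, E, rfl⟩ := List.exists_cons_of_ne_nil (show E ≠ [] by rintro rfl; simp at h4)
  obtain ⟨t, E, rfl⟩ := List.exists_cons_of_ne_nil (show E ≠ [] by rintro rfl; simp at h4)
  have hE : E = [] := by simpa using h4
  subst hE
  rcases hM with hM | hM
  · rcases M4_one x y z t hM with ⟨rfl, rfl, rfl⟩ | ⟨rfl, rfl, rfl⟩
    · obtain ⟨l, rfl⟩ := hmem y (by simp)
      exact Or.inl ⟨l, rfl⟩
    · obtain ⟨l, rfl⟩ := hmem x (by simp)
      exact Or.inr ⟨l, rfl⟩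
  · have h2 := M4_negone x y z t hM
    obtain ⟨l, rfl⟩ := hmem x (by simp)
    obtain ⟨m, rfl⟩ := hmem y (by simp)
    exact absurd h2 (htwo l m)

lemma irred_of_4 (w : ℂ) (hone : ∀ l : ℤ, (l:ℂ) * w ≠ 1 ∧ (l:ℂ) * w ≠ -1)
    (c : List ℂ) (hq : IsQuiddity (subgroupGen w) c) (h4 : c.length = 4) :
    IrreducibleQuiddity (subgroupGen w) c := by
  refine ⟨hq, by omega, ?_⟩
  rintro ⟨a, b, hamem, hbq, ha3, hb3, hce⟩
  have h1 := cyclic_length hce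
  rw [oplus_length] at h1
  rw [h4] at h1
  have hb4 : b.length = 3 := by omega
  exact no_q3 w hone b hbq hb4

lemma main_abstract (w : ℂ) (hone : ∀ l : ℤ, (l:ℂ) * w ≠ 1 ∧ (l:ℂ) * w ≠ -1)
    (htwo : ∀ l m : ℤ, ((l:ℂ) * w) * ((m:ℂ) * w) ≠ 2)
    (hbig : ∀ c : List ℂ, c ≠ [] → (∀ x ∈ c, x ∈ subgroupGen w) → (∀ x ∈ c, x ≠ 0) →
      ¬ (Mlist c = 1 ∨ Mlist c = -1)) :
    {c : List ℂ | IrreducibleQuiddity (subgroupGen w) c} =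
      {c : List ℂ | ∃ l : ℤ, c = [0, (l : ℂ) * w, 0, -((l : ℂ) * w)]} ∪
      {c : List ℂ | ∃ l : ℤ, c = [(l : ℂ) * w, 0, -((l : ℂ) * w), 0]} := by
  ext c
  simp only [Set.mem_setOf_eq, Set.mem_union]
  constructor
  · rintro ⟨hq, hlen3, hnred⟩
    have hne3 : c.length ≠ 3 := no_q3 w hone c hq
    have hlt5 : c.length < 5 := by
      by_contra hge
      push_neg at hge
      have h0 : (0:ℂ) ∈ c := by
        by_contra h0
        exact hbig c hq.1 hq.2.1 (fun x hx hx0 => h0 (hx0 ▸ hx)) hq.2.2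
      exact hnred (red5 w c hq hge h0)
    exact classify4 w htwo c hq (by omega)
  · rintro (⟨l, rfl⟩ | ⟨l, rfl⟩)
    · refine irred_of_4 w hone _ ?_ (by simp)
      refine ⟨by simp, ?_, Or.inl (Mlist_0y0 _)⟩
      intro x hx
      simp at hx
      rcases hx with rfl | rfl | rfl | rfl
      · exact R_zero w
      · exact ⟨l, rfl⟩
      · exact R_zero w
      · exact R_neg w ⟨l, rfl⟩
    · refine irred_of_4 w hone _ ?_ (by simp)
      refine ⟨by simp, ?_, Or.inl (Mlist_y0 _)⟩
      intro x hx
      simp at hx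
      rcases hx with rfl | rfl | rfl | rfl
      · exact ⟨l, rfl⟩
      · exact R_zero w
      · exact R_neg w ⟨l, rfl⟩
      · exact R_zero w
lemma transfer_conj (s₀ : ℝ) (hirr : Irrational s₀) (q : ℚ) (hsq : ((s₀:ℝ):ℂ)^2 = (q:ℂ))
    (aa bb : ℤ) (L : List ℤ)
    (hM : Mlist (L.map (fun l : ℤ => (l:ℂ) * ((aa:ℂ) + (bb:ℂ) * ((s₀:ℝ):ℂ)))) = 1 ∨
          Mlist (L.map (fun l : ℤ => (l:ℂ) * ((aa:ℂ) + (bb:ℂ) * ((s₀:ℝ):ℂ)))) = -1) :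
    Mlist (L.map (fun l : ℤ => (l:ℂ) * ((aa:ℂ) + ((-bb : ℤ):ℂ) * ((s₀:ℝ):ℂ)))) = 1 ∨
      Mlist (L.map (fun l : ℤ => (l:ℂ) * ((aa:ℂ) + ((-bb : ℤ):ℂ) * ((s₀:ℝ):ℂ)))) = -1 := by
  have e1 : L.map (fun l : ℤ => (l:ℂ) * ((aa:ℂ) + (bb:ℂ) * ((s₀:ℝ):ℂ)))
      = (L.map (fun l : ℤ => ((l * aa : ℚ), (l * bb : ℚ)))).map
          (fun p => (p.1:ℂ) + (p.2:ℂ) * ((s₀:ℝ):ℂ)) := by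
    rw [List.map_map]
    congr 1
    funext l
    show (l:ℂ) * ((aa:ℂ) + (bb:ℂ) * ((s₀:ℝ):ℂ)) = ((l * aa : ℚ):ℂ) + ((l * bb : ℚ):ℂ) * _
    push_cast
    ring
  have e2 : L.map (fun l : ℤ => (l:ℂ) * ((aa:ℂ) + ((-bb : ℤ):ℂ) * ((s₀:ℝ):ℂ)))
      = (L.map (fun l : ℤ => ((l * aa : ℚ), (l * bb : ℚ)))).map
          (fun p => (p.1:ℂ) - (p.2:ℂ) * ((s₀:ℝ):ℂ)) := by
    rw [List.map_map]
    congr 1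
    funext l
    show (l:ℂ) * ((aa:ℂ) + ((-bb : ℤ):ℂ) * ((s₀:ℝ):ℂ)) = ((l * aa : ℚ):ℂ) - ((l * bb : ℚ):ℂ) * _
    push_cast
    ring
  rw [e2]
  rw [e1] at hM
  exact conj_transfer s₀ hirr q hsq _ hM

lemma transfer_neg (v : ℂ) (L : List ℤ)
    (hM : Mlist (L.map (fun l : ℤ => (l:ℂ) * v)) = 1 ∨
          Mlist (L.map (fun l : ℤ => (l:ℂ) * v)) = -1) :
    Mlist (L.map (fun l : ℤ => (l:ℂ) * (-v))) = 1 ∨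
      Mlist (L.map (fun l : ℤ => (l:ℂ) * (-v))) = -1 := by
  have e : L.map (fun l : ℤ => (l:ℂ) * (-v))
      = (L.map (fun l : ℤ => (l:ℂ) * v)).map (fun x => -x) := by
    rw [List.map_map]
    congr 1
    funext l
    show (l:ℂ) * (-v) = -((l:ℂ) * v)
    ring
  rw [e]
  exact quiddity_neg _ hM

end AuxQuiddity

theorem stmt1 (a b k : ℤ) (ha : a ≠ 0) (hb : b ≠ 0) (hk : 2 ≤ k)
    (w : ℂ) (hw : w = (a : ℂ) + (b : ℂ) * (Real.sqrt (k : ℝ) : ℂ))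
    (h1 : w ≠ 1) (h2 : w ≠ -1) :
    {c : List ℂ | IrreducibleQuiddity (subgroupGen w) c} =
      {c : List ℂ | ∃ l : ℤ, c = [0, (l : ℂ) * w, 0, -((l : ℂ) * w)]} ∪
      {c : List ℂ | ∃ l : ℤ, c = [(l : ℂ) * w, 0, -((l : ℂ) * w), 0]} := by
  have hk0 : (0:ℝ) ≤ (k:ℝ) := by
    have : (0:ℤ) ≤ k := by omega
    exact_mod_cast this
  set s₀ : ℝ := Real.sqrt (k:ℝ) with hs₀
  have hs0_sq : s₀^2 = (k:ℝ) := Real.sq_sqrt hk0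
  have hs0_nonneg : (0:ℝ) ≤ s₀ := Real.sqrt_nonneg _
  have hk2 : (2:ℝ) ≤ (k:ℝ) := by exact_mod_cast hk
  have hs0_ge1 : (1:ℝ) ≤ s₀ := by nlinarith [hs0_sq, hs0_nonneg, hk2]
  by_cases hsq : IsSquare k
  · -- k is a perfect square; w is an integer
    obtain ⟨m0, hm0⟩ := hsq
    set m : ℤ := |m0| with hmdef
    have hm2 : m^2 = k := by rw [hmdef, sq_abs, hm0]; ring
    have hmnn : (0:ℤ) ≤ m := abs_nonneg m0
    have hsm : s₀ = (m:ℝ) := by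
      rw [hs₀, show ((k:ℤ):ℝ) = ((m:ℝ))^2 by exact_mod_cast hm2.symm]
      exact Real.sqrt_sq (by exact_mod_cast hmnn)
    set W : ℤ := a + b * m with hWdef
    have hwW : w = (W:ℂ) := by rw [hw, hsm, hWdef]; push_cast; ring
    have hWne1 : W ≠ 1 := fun h => h1 (by rw [hwW, h]; norm_num)
    have hWnem1 : W ≠ -1 := fun h => h2 (by rw [hwW, h]; push_cast; ring)
    have honeZ : ∀ n : ℤ, n * W ≠ 1 ∧ n * W ≠ -1 := by
      intro n
      constructor <;> intro h
      · rcases Int.isUnit_iff.mp (IsUnit.of_mul_eq_one (a := W) n (by linear_combination h)) with h' | h'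
        · exact hWne1 h'
        · exact hWnem1 h'
      · rcases Int.isUnit_iff.mp (IsUnit.of_mul_eq_one (a := W) (-n) (by linear_combination -h))
          with h' | h'
        · exact hWne1 h'
        · exact hWnem1 h'
    have hone : ∀ l : ℤ, (l:ℂ) * w ≠ 1 ∧ (l:ℂ) * w ≠ -1 := by
      intro l
      constructor <;> intro hEq <;> rw [hwW] at hEq
      · have hC : ((l * W : ℤ):ℂ) = ((1 : ℤ):ℂ) := by push_cast; linear_combination hEq
        exact (honeZ l).1 (by exact_mod_cast hC)
      · have hC : ((l * W : ℤ):ℂ) = ((-1 : ℤ):ℂ) := by push_cast; linear_combination hEq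
        exact (honeZ l).2 (by exact_mod_cast hC)
    have htwo : ∀ l m' : ℤ, ((l:ℂ) * w) * ((m':ℂ) * w) ≠ 2 := by
      intro l n hEq
      rw [hwW] at hEq
      have hC : ((l * W * (n * W) : ℤ):ℂ) = ((2 : ℤ):ℂ) := by push_cast; linear_combination hEq
      have hZ : l * W * (n * W) = 2 := by exact_mod_cast hC
      by_cases hW0 : W = 0
      · rw [hW0] at hZ; norm_num at hZ
      · have h4 : 4 ≤ W^2 := by
          have : W ≤ -2 ∨ 2 ≤ W := by omega
          rcases this with h | h <;> nlinarith
        have hdvd : W^2 ∣ 2 := ⟨l * n, by linear_combination -hZ⟩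
        have := Int.le_of_dvd (by norm_num) hdvd
        omega
    have hbig : ∀ c : List ℂ, c ≠ [] → (∀ x ∈ c, x ∈ subgroupGen w) → (∀ x ∈ c, x ≠ 0) →
        ¬ (Mlist c = 1 ∨ Mlist c = -1) := by
      intro c hne hmem hnz
      obtain ⟨L, rfl⟩ := exists_int_list w c hmem
      apply not_pm_one_of_big _ hne
      intro x hx
      obtain ⟨l, hl, rfl⟩ := List.mem_map.mp hx
      have hx0 : (l:ℂ) * w ≠ 0 := hnz _ hx
      have hln : l * W ≠ 0 := by
        intro h0
        apply hx0
        rw [hwW, show (l:ℂ) * (W:ℂ) = ((l * W : ℤ):ℂ) by push_cast; ring, h0]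
        simp
      have habs : 2 ≤ |l * W| := by
        have e1 := (honeZ l).1
        have e2 := (honeZ l).2
        rw [Int.abs_eq_natAbs]
        omega
      rw [hwW, show (l:ℂ) * (W:ℂ) = ((l * W : ℤ):ℂ) by push_cast; ring, Complex.norm_intCast]
      exact_mod_cast habs
    exact main_abstract w hone htwo hbig
  · -- k not a square : s₀ is irrational
    have hirr : Irrational s₀ := by
      rw [hs₀]
      exact (irrational_sqrt_intCast_iff_of_nonneg (by omega)).mpr hsq
    have hsqC : ((s₀:ℝ):ℂ)^2 = ((k:ℚ):ℂ) := by
      rw [← Complex.ofReal_pow, hs0_sq]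
      norm_cast
    have hsqC2 : ((s₀:ℝ):ℂ)^2 = ((k:ℤ):ℂ) := by
      rw [← Complex.ofReal_pow, hs0_sq]
      norm_cast
    have indepZ : ∀ (x y : ℤ) (r : ℚ), (x:ℝ) + (y:ℝ) * s₀ = (r:ℝ) → y = 0 ∧ (x:ℚ) = r := by
      intro x y r h
      have hy : y = 0 := by
        by_contra hy
        apply hirr
        refine ⟨(r - x)/y, ?_⟩
        have hyR : (y:ℝ) ≠ 0 := Int.cast_ne_zero.mpr hy
        push_cast
        field_simp
        linarith
      subst hy
      simp at h
      exact ⟨rfl, by exact_mod_cast h⟩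
    have hone : ∀ l : ℤ, (l:ℂ) * w ≠ 1 ∧ (l:ℂ) * w ≠ -1 := by
      intro l
      constructor <;> intro hEq <;> rw [hw] at hEq
      · have hre : ((l * a : ℤ):ℝ) + ((l * b : ℤ):ℝ) * s₀ = ((1:ℚ):ℝ) := by
          have hC : (((l * a : ℤ):ℝ):ℂ) + (((l * b : ℤ):ℝ):ℂ) * ((s₀:ℝ):ℂ) = (((1:ℚ):ℝ):ℂ) := by
            push_cast
            linear_combination hEq
          exact_mod_cast hC
        obtain ⟨hy, hx⟩ := indepZ _ _ _ hre
        have hl0 : l = 0 := (mul_eq_zero.mp hy).resolve_right hb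
        rw [hl0] at hx
        norm_num at hx
      · have hre : ((l * a : ℤ):ℝ) + ((l * b : ℤ):ℝ) * s₀ = ((-1:ℚ):ℝ) := by
          have hC : (((l * a : ℤ):ℝ):ℂ) + (((l * b : ℤ):ℝ):ℂ) * ((s₀:ℝ):ℂ) = (((-1:ℚ):ℝ):ℂ) := by
            push_cast
            linear_combination hEq
          exact_mod_cast hC
        obtain ⟨hy, hx⟩ := indepZ _ _ _ hre
        have hl0 : l = 0 := (mul_eq_zero.mp hy).resolve_right hb
        rw [hl0] at hx
        norm_num at hx
    have htwo : ∀ l m' : ℤ, ((l:ℂ) * w) * ((m':ℂ) * w) ≠ 2 := by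
      intro l n hEq
      rw [hw] at hEq
      have hre : ((l * n * (a^2 + k * b^2) : ℤ):ℝ) + ((2 * l * n * a * b : ℤ):ℝ) * s₀
          = ((2:ℚ):ℝ) := by
        have hC : (((l * n * (a^2 + k * b^2) : ℤ):ℝ):ℂ)
            + (((2 * l * n * a * b : ℤ):ℝ):ℂ) * ((s₀:ℝ):ℂ) = (((2:ℚ):ℝ):ℂ) := by
          push_cast
          linear_combination hEq - ((l:ℂ) * (n:ℂ) * (b:ℂ)^2) * hsqC2
        exact_mod_cast hC
      obtain ⟨hy, hx⟩ := indepZ _ _ _ hre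
      have hab : a * b ≠ 0 := mul_ne_zero ha hb
      have hln : l * n = 0 := by
        have h2' : 2 * (l * n) * (a * b) = 0 := by linear_combination hy
        rcases mul_eq_zero.mp h2' with h' | h'
        · omega
        · exact absurd h' hab
      have hz : l * n * (a^2 + k * b^2) = 0 := by rw [hln]; ring
      rw [hz] at hx
      norm_num at hx
    have hbig : ∀ c : List ℂ, c ≠ [] → (∀ x ∈ c, x ∈ subgroupGen w) → (∀ x ∈ c, x ≠ 0) →
        ¬ (Mlist c = 1 ∨ Mlist c = -1) := by
      intro c hne hmem hnz
      obtain ⟨L, rfl⟩ := exists_int_list w c hmem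
      have hL0 : ∀ l ∈ L, l ≠ 0 := by
        intro l hl h0
        apply hnz ((l:ℂ) * w) (List.mem_map_of_mem hl)
        rw [h0]
        simp
      intro hM
      rw [hw] at hM
      set p : ℤ := |a| with hpdef
      set q' : ℤ := |b| with hqdef
      have key : Mlist (L.map (fun l : ℤ => (l:ℂ) * ((p:ℂ) + (q':ℂ) * ((s₀:ℝ):ℂ)))) = 1 ∨
          Mlist (L.map (fun l : ℤ => (l:ℂ) * ((p:ℂ) + (q':ℂ) * ((s₀:ℝ):ℂ)))) = -1 := by
        rcases lt_or_gt_of_ne ha with haneg | hapos <;>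
          rcases lt_or_gt_of_ne hb with hbneg | hbpos
        · -- a < 0, b < 0 : negate
          have hres := transfer_neg ((a:ℂ) + (b:ℂ) * ((s₀:ℝ):ℂ)) L hM
          have heq : (fun l : ℤ => (l:ℂ) * ((p:ℂ) + (q':ℂ) * ((s₀:ℝ):ℂ)))
              = (fun l : ℤ => (l:ℂ) * (-((a:ℂ) + (b:ℂ) * ((s₀:ℝ):ℂ)))) := by
            funext l
            rw [hpdef, hqdef, abs_of_neg haneg, abs_of_neg hbneg]
            push_cast
            ring
          rw [heq]
          exact hres
        · -- a < 0, b > 0 : conjugate then negate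
          have hres1 := transfer_conj s₀ hirr (k:ℚ) hsqC a b L hM
          have hres := transfer_neg ((a:ℂ) + ((-b : ℤ):ℂ) * ((s₀:ℝ):ℂ)) L hres1
          have heq : (fun l : ℤ => (l:ℂ) * ((p:ℂ) + (q':ℂ) * ((s₀:ℝ):ℂ)))
              = (fun l : ℤ => (l:ℂ) * (-((a:ℂ) + ((-b : ℤ):ℂ) * ((s₀:ℝ):ℂ)))) := by
            funext l
            rw [hpdef, hqdef, abs_of_neg haneg, abs_of_pos hbpos]
            push_cast
            ring
          rw [heq]
          exact hres
        · -- a > 0, b < 0 : conjugate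
          have hres := transfer_conj s₀ hirr (k:ℚ) hsqC a b L hM
          have heq : (fun l : ℤ => (l:ℂ) * ((p:ℂ) + (q':ℂ) * ((s₀:ℝ):ℂ)))
              = (fun l : ℤ => (l:ℂ) * ((a:ℂ) + ((-b : ℤ):ℂ) * ((s₀:ℝ):ℂ))) := by
            funext l
            rw [hpdef, hqdef, abs_of_pos hapos, abs_of_neg hbneg]
          rw [heq]
          exact hres
        · -- a > 0, b > 0 : nothing to do
          have heq : (fun l : ℤ => (l:ℂ) * ((p:ℂ) + (q':ℂ) * ((s₀:ℝ):ℂ)))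
              = (fun l : ℤ => (l:ℂ) * ((a:ℂ) + (b:ℂ) * ((s₀:ℝ):ℂ))) := by
            funext l
            rw [hpdef, hqdef, abs_of_pos hapos, abs_of_pos hbpos]
          rw [heq]
          exact hM
      apply not_pm_one_of_big _ (by simpa using hne) _ key
      intro x hx
      obtain ⟨l, hl, rfl⟩ := List.mem_map.mp hx
      have hl0 : l ≠ 0 := hL0 l hl
      have h1l : (1:ℝ) ≤ |(l:ℝ)| := by
        have h1l' : (1:ℤ) ≤ |l| := by rw [Int.abs_eq_natAbs]; omega
        calc (1:ℝ) ≤ ((|l| : ℤ):ℝ) := by exact_mod_cast h1l'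
          _ = |(l:ℝ)| := by push_cast; ring
      have hp1 : (1:ℝ) ≤ (p:ℝ) := by
        have : (1:ℤ) ≤ p := by rw [hpdef, Int.abs_eq_natAbs]; omega
        exact_mod_cast this
      have hq1 : (1:ℝ) ≤ (q':ℝ) := by
        have : (1:ℤ) ≤ q' := by rw [hqdef, Int.abs_eq_natAbs]; omega
        exact_mod_cast this
      have hpq : (2:ℝ) ≤ (p:ℝ) + (q':ℝ) * s₀ := by nlinarith
      rw [show (l:ℂ) * ((p:ℂ) + (q':ℂ) * ((s₀:ℝ):ℂ))
          = ((((l:ℝ) * ((p:ℝ) + (q':ℝ) * s₀)) : ℝ):ℂ) by push_cast; ring,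
        Complex.norm_real, Real.norm_eq_abs, abs_mul, abs_of_nonneg (by linarith : (0:ℝ) ≤ (p:ℝ) + (q':ℝ) * s₀)]
      nlinarith
    exact main_abstract w hone htwo hbig
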